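/- For the logistic equation with constant negative feedback and purely oscillatory growth rate, dx/dt = N₀·sin(ωt)·x - C·x²/K with N₀ ≠ 0, C > 0, K > 0, ω > 0, any solution with x(0) = x₀ > 0 remains positive and bounded for all t ≥ 0: there exists M > 0 with 0 < x(t) ≤ M for all t ≥ 0. -/

import Mathlib

open Real

/-- Case-1 with `B = 0`: any solution of `dx/dt = N₀ sin(ωt) x - C x²/K` starting at
`x₀ > 0` stays positive and bounded for all `t ≥ 0`. -/
theorem case1_positive_bounded
    (K ω C N₀ x₀ : ℝ) (hK : 0 < K) (hω : 0 < ω) (hC : 0 < C) (hN₀ : N₀ ≠ 0)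
    (hx₀ : 0 < x₀)
    (x : ℝ → ℝ) (hx0 : x 0 = x₀)
    (hx : ∀ t, 0 ≤ t →
      HasDerivAt x (N₀ * Real.sin (ω * t) * x t - C * (x t) ^ 2 / K) t) :
    ∃ M > 0, ∀ t, 0 ≤ t → 0 < x t ∧ x t ≤ M := by
  have hxc : ∀ t : ℝ, 0 ≤ t → ContinuousAt x t := fun t ht => (hx t ht).continuousAt
  -- extended coefficient function, continuous on all of ℝ
  set b : ℝ → ℝ := fun t => N₀ * Real.sin (ω * t) - C * x (max t 0) / K with hb_def
  have hxm : Continuous fun t : ℝ => x (max t 0) := by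
    rw [continuous_iff_continuousAt]
    intro t
    have h1 : ContinuousAt (fun s : ℝ => max s 0) t :=
      (continuous_id.max continuous_const).continuousAt
    exact ContinuousAt.comp (hxc (max t 0) (le_max_right _ _)) h1
  have hbcont : Continuous b := by
    apply Continuous.sub
    · exact continuous_const.mul (Real.continuous_sin.comp (continuous_const.mul continuous_id))
    · exact (continuous_const.mul hxm).div_const K
  have hbeq : ∀ t : ℝ, 0 ≤ t → b t = N₀ * Real.sin (ω * t) - C * x t / K := by
    intro t ht; simp [hb_def, max_eq_left ht]
  -- primitive of b
  set A : ℝ → ℝ := fun t => ∫ s in (0:ℝ)..t, b s with hA_def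
  have hA : ∀ t : ℝ, HasDerivAt A (b t) t := fun t =>
    (hbcont.integral_hasStrictDerivAt 0 t).hasDerivAt
  have hA0 : A 0 = 0 := by simp [hA_def]
  -- x t = x₀ * exp (A t) on [0, ∞)
  have key : ∀ t : ℝ, 0 ≤ t → x t = x₀ * Real.exp (A t) := by
    intro T hT
    set g : ℝ → ℝ := fun t => x t * Real.exp (-(A t)) with hg_def
    have hg' : ∀ t : ℝ, 0 ≤ t → HasDerivAt g 0 t := by
      intro t ht
      have h1 : HasDerivAt (fun u => Real.exp (-(A u))) (-(b t) * Real.exp (-(A t))) t := by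
        have := ((hA t).neg).exp
        simpa [mul_comm] using this
      have h2 : HasDerivAt (fun u => x u * Real.exp (-(A u))) ((N₀ * Real.sin (ω * t) * x t - C * (x t) ^ 2 / K) * Real.exp (-(A t)) + x t * (-(b t) * Real.exp (-(A t)))) t := (hx t ht).mul h1
      convert h2 using 1
      rw [hbeq t ht]
      field_simp
      ring
    have hcont : ContinuousOn g (Set.Icc 0 T) := fun u hu =>
      ((hg' u hu.1).continuousAt).continuousWithinAt
    have := constant_of_has_deriv_right_zero hcont
      (fun u hu => ((hg' u hu.1).hasDerivWithinAt)) T (Set.mem_Icc.2 ⟨hT, le_refl T⟩)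
    have hg0 : g 0 = x₀ := by simp [hg_def, hA0, hx0]
    have hgT : x T * Real.exp (-(A T)) = x₀ := by rw [← hg0]; exact this
    have : x T = x₀ * Real.exp (A T) := by
      have he : Real.exp (-(A T)) ≠ 0 := (Real.exp_pos _).ne'
      field_simp [Real.exp_neg] at hgT ⊢
      rw [← hgT, mul_assoc, ← Real.exp_add]; simp
    exact this
  have hpos : ∀ t : ℝ, 0 ≤ t → 0 < x t := by
    intro t ht; rw [key t ht]; positivity
  -- explicit primitive of N₀ sin(ωt)
  set B : ℝ → ℝ := fun t => N₀ * (1 - Real.cos (ω * t)) / ω with hB_def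
  have hB : ∀ t : ℝ, HasDerivAt B (N₀ * Real.sin (ω * t)) t := by
    intro t
    have hc : HasDerivAt (fun u : ℝ => Real.cos (ω * u)) (-Real.sin (ω * t) * ω) t := by
      have := (Real.hasDerivAt_cos (ω * t)).comp t ((hasDerivAt_id t).const_mul ω)
      simpa [mul_comm, Function.comp_def] using this
    have : HasDerivAt (fun u => N₀ * (1 - Real.cos (ω * u)) / ω)
        (N₀ * (0 - (-Real.sin (ω * t) * ω)) / ω) t := by
      exact (((hasDerivAt_const t (1:ℝ)).sub hc).const_mul N₀).div_const ω
    convert this using 1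
    field_simp
    ring
  have hB0 : B 0 = 0 := by simp [hB_def]
  -- w = B - A is monotone on [0,∞)
  set w : ℝ → ℝ := fun t => B t - A t with hw_def
  have hw' : ∀ t : ℝ, HasDerivAt w (N₀ * Real.sin (ω * t) - b t) t := fun t =>
    (hB t).sub (hA t)
  have hwmono : MonotoneOn w (Set.Ici 0) := by
    apply monotoneOn_of_deriv_nonneg (convex_Ici 0)
    · exact fun u _ => ((hw' u).continuousAt).continuousWithinAt
    · intro u hu
      exact ((hw' u).differentiableAt).differentiableWithinAt
    · intro u hu
      rw [(hw' u).deriv]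
      have hu0 : (0:ℝ) ≤ u := le_of_lt (by simpa using hu)
      rw [hbeq u hu0]
      have := hpos u hu0
      have : 0 ≤ C * x u / K := by positivity
      linarith
  have hAB : ∀ t : ℝ, 0 ≤ t → A t ≤ B t := by
    intro t ht
    have := hwmono (Set.mem_Ici.2 (le_refl 0)) (Set.mem_Ici.2 ht) ht
    simp only [hw_def, hB0, hA0] at this
    linarith
  -- B is bounded above by 2|N₀|/ω
  have hBbdd : ∀ t : ℝ, B t ≤ 2 * |N₀| / ω := by
    intro t
    have h1 : |N₀ * (1 - Real.cos (ω * t))| ≤ |N₀| * 2 := by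
      rw [abs_mul]
      apply mul_le_mul_of_nonneg_left _ (abs_nonneg _)
      rw [abs_le]
      constructor <;> nlinarith [Real.cos_le_one (ω * t), Real.neg_one_le_cos (ω * t)]
    have h2 : N₀ * (1 - Real.cos (ω * t)) ≤ 2 * |N₀| := by
      have := (abs_le.1 h1).2; linarith
    simp only [hB_def]
    exact div_le_div_of_nonneg_right h2 hω.le
  refine ⟨x₀ * Real.exp (2 * |N₀| / ω), by positivity, fun t ht => ⟨hpos t ht, ?_⟩⟩
  rw [key t ht]
  have : Real.exp (A t) ≤ Real.exp (2 * |N₀| / ω) :=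
    Real.exp_le_exp.2 ((hAB t ht).trans (hBbdd t))
  nlinarith [Real.exp_pos (A t)]
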